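/- (Lower bound for the caloric B^{-1}_{∞,∞} norm of anisotropically scaled data, case α < β.) Let 0 ≤ α < β < 1 and let f, g, h be Schwartz functions on ℝ. For ε > 0 define ψ^ε(x) = f(ε^α x₁) g(ε^β x₂) h(ε x₃) on ℝ³. Then there exists ε₀ > 0 such that for all 0 < ε < ε₀, sup_{t>0} t^{1/2} ‖H₃(t) ψ^ε‖_{L^∞(ℝ³)} ≥ (1/4) ε^{−α} · ( sup_{t>0} t^{1/2} ‖H₁(t) f‖_{L^∞(ℝ)} ) · ‖g‖_{L^∞(ℝ)} · ‖h‖_{L^∞(ℝ)}. -/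

import Mathlib

open MeasureTheory

/-- The heat semigroup on `ℝ³`. -/
noncomputable def heat3 (t : ℝ) (φ : EuclideanSpace ℝ (Fin 3) → ℝ)
    (x : EuclideanSpace ℝ (Fin 3)) : ℝ :=
  ∫ y : EuclideanSpace ℝ (Fin 3),
    (4 * Real.pi * t) ^ (-(3 : ℝ) / 2) * Real.exp (-‖x - y‖ ^ 2 / (4 * t)) * φ y

/-- The heat semigroup on `ℝ`. -/
noncomputable def heat1 (t : ℝ) (φ : ℝ → ℝ) (x : ℝ) : ℝ :=
  ∫ y : ℝ, (4 * Real.pi * t) ^ (-(1 : ℝ) / 2) * Real.exp (-(x - y) ^ 2 / (4 * t)) * φ y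

section Aux

open Real Filter

lemma rpow_neg_half_eq {x : ℝ} (hx : 0 ≤ x) : x ^ (-(1:ℝ)/2) = (Real.sqrt x)⁻¹ := by
  rw [sqrt_eq_rpow, ← Real.rpow_neg hx]
  norm_num

lemma heat1_scale {t c : ℝ} (ht : 0 < t) (hc : 0 < c) (φ : ℝ → ℝ) (x : ℝ) :
    heat1 t (fun y => φ (c * y)) x = heat1 (c ^ 2 * t) φ (c * x) := by
  unfold heat1
  have h4 : (0:ℝ) < 4 * π * t := by positivity
  have key := Measure.integral_comp_mul_left
    (fun z => (4 * π * t) ^ (-(1:ℝ)/2) * Real.exp (-(x - z / c) ^ 2 / (4 * t)) * φ z) c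
  have h1 : (fun y : ℝ => (4 * π * t) ^ (-(1:ℝ)/2) * Real.exp (-(x - y) ^ 2 / (4 * t)) * φ (c * y))
      = fun y : ℝ => (4 * π * t) ^ (-(1:ℝ)/2) * Real.exp (-(x - (c * y) / c) ^ 2 / (4 * t)) * φ (c * y) := by
    funext y; rw [mul_div_cancel_left₀ _ hc.ne']
  rw [h1]
  rw [key, abs_of_pos (inv_pos.2 hc), smul_eq_mul, ← MeasureTheory.integral_const_mul]
  congr 1; funext z
  have hcoef : (4 * π * (c ^ 2 * t)) ^ (-(1:ℝ)/2) = c⁻¹ * (4 * π * t) ^ (-(1:ℝ)/2) := by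
    rw [rpow_neg_half_eq h4.le, rpow_neg_half_eq (by positivity), show 4 * π * (c ^ 2 * t) = c^2 * (4 * π * t) by ring,
      Real.sqrt_mul (by positivity), Real.sqrt_sq hc.le, mul_inv]
  have hexp : -(c * x - z) ^ 2 / (4 * (c ^ 2 * t)) = -(x - z / c) ^ 2 / (4 * t) := by
    have : (c * x - z) ^ 2 = c ^ 2 * (x - z / c) ^ 2 := by field_simp
    rw [this]; field_simp
  rw [hcoef, hexp]; ring

lemma heat1_rep {t : ℝ} (ht : 0 < t) (φ : ℝ → ℝ) (x : ℝ) :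
    heat1 t φ x = ∫ v : ℝ, π ^ (-(1:ℝ)/2) * Real.exp (-v ^ 2) * φ (x - 2 * Real.sqrt t * v) := by
  unfold heat1
  have h4 : (0:ℝ) < 4 * π * t := by positivity
  have hst : (0:ℝ) < Real.sqrt t := Real.sqrt_pos.2 ht
  have step1 : (∫ y : ℝ, (4 * π * t) ^ (-(1:ℝ)/2) * Real.exp (-(x - y) ^ 2 / (4 * t)) * φ y)
      = ∫ w : ℝ, (4 * π * t) ^ (-(1:ℝ)/2) * Real.exp (-w ^ 2 / (4 * t)) * φ (x - w) := by
    rw [← integral_sub_left_eq_self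
      (fun w => (4 * π * t) ^ (-(1:ℝ)/2) * Real.exp (-w ^ 2 / (4 * t)) * φ (x - w)) volume x]
    congr 1; funext y
    simp [sub_sub_cancel]
  rw [step1]
  have key := Measure.integral_comp_mul_left
    (fun w => (4 * π * t) ^ (-(1:ℝ)/2) * Real.exp (-w ^ 2 / (4 * t)) * φ (x - w)) (2 * Real.sqrt t)
  have step2 : (∫ v : ℝ, π ^ (-(1:ℝ)/2) * Real.exp (-v ^ 2) * φ (x - 2 * Real.sqrt t * v))
      = ∫ v : ℝ, (2 * Real.sqrt t) *
          ((4 * π * t) ^ (-(1:ℝ)/2) * Real.exp (-(2 * Real.sqrt t * v) ^ 2 / (4 * t)) * φ (x - 2 * Real.sqrt t * v)) := by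
    congr 1; funext v
    have hsq : (2 * Real.sqrt t * v) ^ 2 = 4 * t * v ^ 2 := by
      have h : Real.sqrt t ^ 2 = t := Real.sq_sqrt ht.le
      nlinarith [h]
    have hexp : -(2 * Real.sqrt t * v) ^ 2 / (4 * t) = -v ^ 2 := by
      rw [hsq]; field_simp
    have hcoef : (2 * Real.sqrt t) * (4 * π * t) ^ (-(1:ℝ)/2) = π ^ (-(1:ℝ)/2) := by
      rw [rpow_neg_half_eq h4.le, rpow_neg_half_eq pi_pos.le,
        show 4 * π * t = 4 * t * π by ring, Real.sqrt_mul (by positivity),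
        show (4:ℝ) * t = (2 * Real.sqrt t)^2 by rw [mul_pow, Real.sq_sqrt ht.le]; ring,
        Real.sqrt_sq (by positivity)]
      field_simp
    rw [hexp, show (2 * Real.sqrt t) * ((4 * π * t) ^ (-(1:ℝ)/2) * Real.exp (-v^2) * φ (x - 2 * Real.sqrt t * v))
        = ((2 * Real.sqrt t) * (4 * π * t) ^ (-(1:ℝ)/2)) * Real.exp (-v^2) * φ (x - 2 * Real.sqrt t * v) by ring,
      hcoef]
  rw [step2, MeasureTheory.integral_const_mul, key, abs_of_pos (by positivity : (0:ℝ) < (2 * Real.sqrt t)⁻¹),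
    smul_eq_mul, ← mul_assoc, mul_inv_cancel₀ (by positivity : (2 * Real.sqrt t) ≠ 0), one_mul]




lemma gauss_bound_integrable (M : ℝ) :
    Integrable (fun v : ℝ => π ^ (-(1:ℝ)/2) * Real.exp (-v ^ 2) * M) volume := by
  have h : Integrable (fun v : ℝ => Real.exp (-v ^ 2)) volume := by
    have := integrable_exp_neg_mul_sq (b := 1) one_pos
    simpa using this
  exact (h.const_mul _).mul_const M

lemma gauss_bound_apply {φ : ℝ → ℝ} {M : ℝ} (hM : ∀ x, |φ x| ≤ M) (u v : ℝ) :
    ‖π ^ (-(1:ℝ)/2) * Real.exp (-v ^ 2) * φ u‖ ≤ π ^ (-(1:ℝ)/2) * Real.exp (-v ^ 2) * M := by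
  have h1 : (0:ℝ) ≤ π ^ (-(1:ℝ)/2) := Real.rpow_nonneg pi_pos.le _
  rw [Real.norm_eq_abs, abs_mul, abs_mul, abs_of_nonneg h1, abs_of_pos (Real.exp_pos _)]
  exact mul_le_mul_of_nonneg_left (hM u) (by positivity)

lemma heat1_continuous {τ : ℝ} (hτ : 0 < τ) {φ : ℝ → ℝ} (hc : Continuous φ) {M : ℝ}
    (hM : ∀ x, |φ x| ≤ M) : Continuous (heat1 τ φ) := by
  have hrep : heat1 τ φ = fun x => ∫ v : ℝ, π ^ (-(1:ℝ)/2) * Real.exp (-v ^ 2) * φ (x - 2 * Real.sqrt τ * v) :=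
    funext fun x => heat1_rep hτ φ x
  rw [hrep]
  apply continuous_of_dominated (bound := fun v : ℝ => π ^ (-(1:ℝ)/2) * Real.exp (-v ^ 2) * M)
  · intro x
    exact (Continuous.mul (by continuity) (hc.comp (by continuity))).aestronglyMeasurable
  · intro x
    exact ae_of_all _ fun v => gauss_bound_apply hM _ v
  · exact gauss_bound_integrable M
  · exact ae_of_all _ fun v => Continuous.mul (by continuity) (hc.comp (by continuity))

lemma heat1_tendsto {φ : ℝ → ℝ} (hc : Continuous φ) {M : ℝ} (hM : ∀ x, |φ x| ≤ M) (x : ℝ) :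
    Tendsto (fun τ => heat1 τ φ x) (nhdsWithin 0 (Set.Ioi 0)) (nhds (φ x)) := by
  have hrep : ∀ᶠ τ in nhdsWithin (0:ℝ) (Set.Ioi 0),
      (∫ v : ℝ, π ^ (-(1:ℝ)/2) * Real.exp (-v ^ 2) * φ (x - 2 * Real.sqrt τ * v)) = heat1 τ φ x := by
    filter_upwards [self_mem_nhdsWithin] with τ hτ
    exact (heat1_rep hτ φ x).symm
  have hval : (∫ v : ℝ, π ^ (-(1:ℝ)/2) * Real.exp (-v ^ 2) * φ x) = φ x := by
    have h1 : (fun v : ℝ => π ^ (-(1:ℝ)/2) * Real.exp (-v ^ 2) * φ x)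
        = fun v : ℝ => (π ^ (-(1:ℝ)/2) * φ x) * Real.exp (-v ^ 2) := by funext v; ring
    have h2 : (∫ v : ℝ, Real.exp (-v ^ 2)) = Real.sqrt π := by
      have := integral_gaussian 1
      simpa using this
    rw [h1, MeasureTheory.integral_const_mul, h2, rpow_neg_half_eq pi_pos.le]
    have : Real.sqrt π ≠ 0 := by positivity
    field_simp
  have hlim : Tendsto (fun τ => ∫ v : ℝ, π ^ (-(1:ℝ)/2) * Real.exp (-v ^ 2) * φ (x - 2 * Real.sqrt τ * v))
      (nhdsWithin 0 (Set.Ioi 0)) (nhds (∫ v : ℝ, π ^ (-(1:ℝ)/2) * Real.exp (-v ^ 2) * φ x)) := by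
    apply tendsto_integral_filter_of_dominated_convergence
      (bound := fun v : ℝ => π ^ (-(1:ℝ)/2) * Real.exp (-v ^ 2) * M)
    · exact Eventually.of_forall fun τ =>
        (Continuous.mul (by continuity) (hc.comp (by continuity))).aestronglyMeasurable
    · exact Eventually.of_forall fun τ => ae_of_all _ fun v => gauss_bound_apply hM _ v
    · exact gauss_bound_integrable M
    · refine ae_of_all _ fun v => ?_
      have hcont : Continuous fun τ : ℝ => π ^ (-(1:ℝ)/2) * Real.exp (-v ^ 2) * φ (x - 2 * Real.sqrt τ * v) := by
        exact Continuous.mul continuous_const (hc.comp (by continuity))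
      have := (hcont.tendsto 0).mono_left (nhdsWithin_le_nhds (s := Set.Ioi (0:ℝ)))
      simpa using this
  exact Tendsto.congr' hrep (by rwa [hval] at hlim)

lemma heat1_abs_le {t : ℝ} (ht : 0 < t) {φ : ℝ → ℝ} (hi : Integrable φ volume) (x : ℝ) :
    |heat1 t φ x| ≤ (4 * π * t) ^ (-(1:ℝ)/2) * ∫ y : ℝ, |φ y| := by
  have h4 : (0:ℝ) < 4 * π * t := by positivity
  have hnn : (0:ℝ) ≤ (4 * π * t) ^ (-(1:ℝ)/2) := Real.rpow_nonneg h4.le _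
  have key : ‖∫ y : ℝ, (4 * π * t) ^ (-(1:ℝ)/2) * Real.exp (-(x - y) ^ 2 / (4 * t)) * φ y‖
      ≤ ∫ y : ℝ, (4 * π * t) ^ (-(1:ℝ)/2) * |φ y| := by
    apply norm_integral_le_of_norm_le (hi.abs.const_mul _)
    refine ae_of_all _ fun y => ?_
    rw [Real.norm_eq_abs, abs_mul, abs_mul, abs_of_nonneg hnn, abs_of_pos (Real.exp_pos _)]
    have hexp : Real.exp (-(x - y) ^ 2 / (4 * t)) ≤ 1 := by
      rw [Real.exp_le_one_iff]
      apply div_nonpos_of_nonpos_of_nonneg (neg_nonpos.2 (sq_nonneg _)) (by positivity)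
    calc (4 * π * t) ^ (-(1:ℝ)/2) * Real.exp (-(x - y) ^ 2 / (4 * t)) * |φ y|
        ≤ (4 * π * t) ^ (-(1:ℝ)/2) * 1 * |φ y| := by
          apply mul_le_mul_of_nonneg_right (mul_le_mul_of_nonneg_left hexp hnn) (abs_nonneg _)
      _ = (4 * π * t) ^ (-(1:ℝ)/2) * |φ y| := by ring
  rw [show |heat1 t φ x| = ‖heat1 t φ x‖ from rfl]
  unfold heat1
  calc ‖∫ y : ℝ, (4 * π * t) ^ (-(1:ℝ)/2) * Real.exp (-(x - y) ^ 2 / (4 * t)) * φ y‖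
      ≤ ∫ y : ℝ, (4 * π * t) ^ (-(1:ℝ)/2) * |φ y| := key
    _ = (4 * π * t) ^ (-(1:ℝ)/2) * ∫ y : ℝ, |φ y| := MeasureTheory.integral_const_mul _ _

lemma eLpNorm_heat1_le {t : ℝ} (ht : 0 < t) {φ : ℝ → ℝ} (hi : Integrable φ volume) :
    eLpNorm (heat1 t φ) ⊤ volume ≤ ENNReal.ofReal ((4 * π * t) ^ (-(1:ℝ)/2) * ∫ y : ℝ, |φ y|) := by
  rw [eLpNorm_exponent_top]
  exact eLpNormEssSup_le_of_ae_bound (ae_of_all _ fun x => by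
    rw [Real.norm_eq_abs]; exact heat1_abs_le ht hi x)


lemma heat3_factor {t : ℝ} (ht : 0 < t) (F0 F1 F2 : ℝ → ℝ) (x : EuclideanSpace ℝ (Fin 3)) :
    heat3 t (fun z => F0 (z 0) * F1 (z 1) * F2 (z 2)) x
      = heat1 t F0 (x 0) * heat1 t F1 (x 1) * heat1 t F2 (x 2) := by
  have h4 : (0:ℝ) < 4 * π * t := by positivity
  unfold heat3 heat1
  have hmp := (EuclideanSpace.volume_preserving_symm_measurableEquiv_toLp (Fin 3)).symm
  rw [← hmp.integral_comp (MeasurableEquiv.measurableEmbedding _)]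
  have hnorm : ∀ y : Fin 3 → ℝ,
      ‖x - ((MeasurableEquiv.toLp 2 (Fin 3 → ℝ)).symm).symm y‖ ^ 2
        = ∑ i : Fin 3, (x i - y i) ^ 2 := by
    intro y
    rw [EuclideanSpace.norm_eq, Real.sq_sqrt (by positivity)]
    congr 1; funext i
    simp [Real.norm_eq_abs, sq_abs]
  have hint : ∀ y : Fin 3 → ℝ,
      (4 * π * t) ^ (-(3:ℝ)/2) * Real.exp (-‖x - ((MeasurableEquiv.toLp 2 (Fin 3 → ℝ)).symm).symm y‖ ^ 2 / (4 * t)) *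
        (F0 ((((MeasurableEquiv.toLp 2 (Fin 3 → ℝ)).symm).symm y) 0) *
         F1 ((((MeasurableEquiv.toLp 2 (Fin 3 → ℝ)).symm).symm y) 1) *
         F2 ((((MeasurableEquiv.toLp 2 (Fin 3 → ℝ)).symm).symm y) 2))
      = ((4 * π * t) ^ (-(1:ℝ)/2) * Real.exp (-(x 0 - y 0) ^ 2 / (4 * t)) * F0 (y 0)) *
        (((4 * π * t) ^ (-(1:ℝ)/2) * Real.exp (-(x 1 - y 1) ^ 2 / (4 * t)) * F1 (y 1)) *
         (((4 * π * t) ^ (-(1:ℝ)/2) * Real.exp (-(x 2 - y 2) ^ 2 / (4 * t)) * F2 (y 2)) * 1)) := by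
    intro y
    have happ : ∀ i : Fin 3, (((MeasurableEquiv.toLp 2 (Fin 3 → ℝ)).symm).symm y) i = y i := by
      intro i; simp
    have hC : (4 * π * t) ^ (-(3:ℝ)/2) = ((4 * π * t) ^ (-(1:ℝ)/2)) ^ (3:ℕ) := by
      rw [← Real.rpow_natCast ((4 * π * t) ^ (-(1:ℝ)/2)) 3, ← Real.rpow_mul h4.le]
      norm_num
    rw [hnorm y, happ 0, happ 1, happ 2, hC, Fin.sum_univ_three,
      show -((x 0 - y 0) ^ 2 + (x 1 - y 1) ^ 2 + (x 2 - y 2) ^ 2) / (4 * t)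
        = -(x 0 - y 0) ^ 2 / (4 * t) + (-(x 1 - y 1) ^ 2 / (4 * t) + -(x 2 - y 2) ^ 2 / (4 * t)) by ring,
      Real.exp_add, Real.exp_add]
    ring
  calc (∫ y : Fin 3 → ℝ,
        (4 * π * t) ^ (-(3:ℝ)/2) * Real.exp (-‖x - ((MeasurableEquiv.toLp 2 (Fin 3 → ℝ)).symm).symm y‖ ^ 2 / (4 * t)) *
        (F0 ((((MeasurableEquiv.toLp 2 (Fin 3 → ℝ)).symm).symm y) 0) *
         F1 ((((MeasurableEquiv.toLp 2 (Fin 3 → ℝ)).symm).symm y) 1) *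
         F2 ((((MeasurableEquiv.toLp 2 (Fin 3 → ℝ)).symm).symm y) 2)))
      = ∫ y : Fin 3 → ℝ, ∏ i : Fin 3,
          (fun i : Fin 3 => fun v : ℝ => (4 * π * t) ^ (-(1:ℝ)/2) *
            Real.exp (-(x i - v) ^ 2 / (4 * t)) * (![F0, F1, F2] i) v) i (y i) := by
        congr 1; funext y
        rw [Fin.prod_univ_succ, Fin.prod_univ_succ, Fin.prod_univ_succ, Fin.prod_univ_zero]
        exact hint y
    _ = ∏ i : Fin 3, ∫ v : ℝ, (4 * π * t) ^ (-(1:ℝ)/2) *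
            Real.exp (-(x i - v) ^ 2 / (4 * t)) * (![F0, F1, F2] i) v :=
        MeasureTheory.integral_fin_nat_prod_eq_prod (fun i v => (4 * π * t) ^ (-(1:ℝ)/2) * Real.exp (-(x i - v) ^ 2 / (4 * t)) * (![F0, F1, F2] i) v)
    _ = _ := by
        rw [Fin.prod_univ_three]
        rfl


lemma pos_meas_of_lt_eLpNormTop {φ : ℝ → ℝ} {a : ℝ} (ha : 0 ≤ a)
    (hlt : ENNReal.ofReal a < eLpNorm φ ⊤ volume) :
    0 < volume {u : ℝ | a < |φ u|} := by
  by_contra hcon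
  push_neg at hcon
  have h0 : volume {u : ℝ | a < |φ u|} = 0 := le_antisymm hcon (zero_le)
  have hae : ∀ᵐ u : ℝ, ‖φ u‖ ≤ a := by
    rw [ae_iff]
    simpa [Real.norm_eq_abs, not_le] using h0
  have := eLpNormEssSup_le_of_ae_bound hae
  rw [eLpNorm_exponent_top] at hlt
  exact absurd (lt_of_lt_of_le hlt this) (lt_irrefl _)

lemma le_eLpNormTop_of_pos_meas {α : Type*} [MeasurableSpace α] {μ : Measure α} {φ : α → ℝ}
    {c : ENNReal} (h : 0 < μ {x | c ≤ (‖φ x‖₊ : ENNReal)}) :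
    c ≤ eLpNorm φ ⊤ μ := by
  by_contra hcon
  push_neg at hcon
  rw [eLpNorm_exponent_top] at hcon
  have hae : ∀ᵐ x ∂μ, (‖φ x‖₊ : ENNReal) ≤ eLpNormEssSup φ μ := ae_le_eLpNormEssSup
  have : ∀ᵐ x ∂μ, ¬ (c ≤ (‖φ x‖₊ : ENNReal)) := by
    filter_upwards [hae] with x hx
    exact not_le.2 (lt_of_le_of_lt hx hcon)
  rw [ae_iff] at this
  simp only [not_not] at this
  exact absurd this h.ne'

lemma vol_preimage_mul_pos {c : ℝ} (hc : c ≠ 0) {S : Set ℝ} (hS : MeasurableSet S)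
    (h : 0 < volume S) : 0 < volume {u : ℝ | c * u ∈ S} := by
  have hmap := Real.map_volume_mul_left hc
  have : volume ((fun u : ℝ => c * u) ⁻¹' S) = ENNReal.ofReal |c⁻¹| * volume S := by
    rw [← Measure.map_apply (measurable_const_mul c) hS, hmap, Measure.smul_apply, smul_eq_mul]
  rw [show {u : ℝ | c * u ∈ S} = (fun u : ℝ => c * u) ⁻¹' S from rfl, this]
  exact ENNReal.mul_pos (by simp [hc]) h.ne'


end Aux

/-- Lower bound for the caloric `Ḃ^{-1}_{∞,∞}` norm of anisotropically scaled data
(case `α < β`): for `ψ^ε(x) = f(ε^α x₁) g(ε^β x₂) h(ε x₃)` and `ε` small enough,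
`sup_{t>0} t^{1/2} ‖H₃(t)ψ^ε‖_{L^∞} ≥ (1/4) ε^{−α} (sup_{t>0} t^{1/2} ‖H₁(t)f‖_{L^∞})
‖g‖_{L^∞} ‖h‖_{L^∞}`. -/
theorem caloric_besov_lower_bound_of_lt (α β : ℝ) (hα0 : 0 ≤ α) (hαβ : α < β) (hβ1 : β < 1)
    (f g h : SchwartzMap ℝ ℝ) :
    ∃ ε₀ > 0, ∀ ε : ℝ, 0 < ε → ε < ε₀ →
      ENNReal.ofReal ((1 / 4 : ℝ) * ε ^ (-α)) *
          (⨆ (t : ℝ) (_ : 0 < t),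
            ENNReal.ofReal (t ^ ((1 : ℝ) / 2)) * eLpNorm (heat1 t (⇑f)) ⊤ volume) *
          eLpNorm (⇑g) ⊤ volume * eLpNorm (⇑h) ⊤ volume ≤
        ⨆ (t : ℝ) (_ : 0 < t),
          ENNReal.ofReal (t ^ ((1 : ℝ) / 2)) *
            eLpNorm
              (heat3 t (fun z => f (ε ^ α * z 0) * g (ε ^ β * z 1) * h (ε * z 2))) ⊤
              volume := by
  classical
  set C := ⨆ (t : ℝ) (_ : 0 < t),
      ENNReal.ofReal (t ^ ((1 : ℝ) / 2)) * eLpNorm (heat1 t (⇑f)) ⊤ volume with hCdef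
  set G := eLpNorm (⇑g) ⊤ volume with hGdef
  set H := eLpNorm (⇑h) ⊤ volume with hHdef
  -- trivial cases
  by_cases hC0 : C = 0
  · exact ⟨1, one_pos, fun ε _ _ => by simp [hC0]⟩
  by_cases hG0 : G = 0
  · exact ⟨1, one_pos, fun ε _ _ => by simp [hG0]⟩
  by_cases hH0 : H = 0
  · exact ⟨1, one_pos, fun ε _ _ => by simp [hH0]⟩
  -- boundedness facts
  have hfi : Integrable (⇑f) volume := f.integrable
  have hMf : ∀ x, |f x| ≤ (SchwartzMap.seminorm ℝ 0 0) f := fun x => by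
    rw [← Real.norm_eq_abs]; exact f.norm_le_seminorm ℝ x
  have hMg : ∀ x, |g x| ≤ (SchwartzMap.seminorm ℝ 0 0) g := fun x => by
    rw [← Real.norm_eq_abs]; exact g.norm_le_seminorm ℝ x
  have hMh : ∀ x, |h x| ≤ (SchwartzMap.seminorm ℝ 0 0) h := fun x => by
    rw [← Real.norm_eq_abs]; exact h.norm_le_seminorm ℝ x
  -- C is finite
  have hCt : C ≠ ⊤ := by
    refine ne_top_of_le_ne_top
      (ENNReal.ofReal_ne_top :
        ENNReal.ofReal ((4 * Real.pi) ^ (-(1:ℝ)/2) * ∫ y : ℝ, |f y|) ≠ ⊤)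
      (iSup₂_le fun t ht => ?_)
    have hcoef : t ^ ((1:ℝ)/2) * ((4 * Real.pi * t) ^ (-(1:ℝ)/2) * ∫ y : ℝ, |f y|)
        = (4 * Real.pi) ^ (-(1:ℝ)/2) * ∫ y : ℝ, |f y| := by
      have hst : (0:ℝ) < Real.sqrt t := Real.sqrt_pos.2 ht
      rw [rpow_neg_half_eq (by positivity), rpow_neg_half_eq (by positivity),
        ← Real.sqrt_eq_rpow, show 4 * Real.pi * t = 4 * Real.pi * t by rfl,
        Real.sqrt_mul (by positivity) t]
      field_simp
    calc ENNReal.ofReal (t ^ ((1:ℝ)/2)) * eLpNorm (heat1 t (⇑f)) ⊤ volume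
        ≤ ENNReal.ofReal (t ^ ((1:ℝ)/2)) *
            ENNReal.ofReal ((4 * Real.pi * t) ^ (-(1:ℝ)/2) * ∫ y : ℝ, |f y|) :=
          mul_le_mul_right (eLpNorm_heat1_le ht hfi) _
      _ = ENNReal.ofReal (t ^ ((1:ℝ)/2) * ((4 * Real.pi * t) ^ (-(1:ℝ)/2) * ∫ y : ℝ, |f y|)) :=
          (ENNReal.ofReal_mul (Real.rpow_nonneg ht.le _)).symm
      _ = ENNReal.ofReal ((4 * Real.pi) ^ (-(1:ℝ)/2) * ∫ y : ℝ, |f y|) := by rw [hcoef]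
  have hGt : G ≠ ⊤ := by
    rw [hGdef, eLpNorm_exponent_top]
    exact ne_top_of_le_ne_top ENNReal.ofReal_ne_top
      (eLpNormEssSup_le_of_ae_bound (ae_of_all _ (g.norm_le_seminorm ℝ)))
  have hHt : H ≠ ⊤ := by
    rw [hHdef, eLpNorm_exponent_top]
    exact ne_top_of_le_ne_top ENNReal.ofReal_ne_top
      (eLpNormEssSup_le_of_ae_bound (ae_of_all _ (h.norm_le_seminorm ℝ)))
  -- choose s₀
  have h34C : ENNReal.ofReal (3/4 : ℝ) * C < C := by
    conv_rhs => rw [← one_mul C]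
    apply ENNReal.mul_lt_mul_left hC0 hCt
    exact ENNReal.ofReal_lt_one.2 (by norm_num)
  obtain ⟨s₀, hs₀, hterm⟩ : ∃ s₀ : ℝ, ∃ _ : 0 < s₀, ENNReal.ofReal (3/4 : ℝ) * C
      < ENNReal.ofReal (s₀ ^ ((1:ℝ)/2)) * eLpNorm (heat1 s₀ (⇑f)) ⊤ volume := by
    have h2 := h34C
    rw [hCdef] at h2
    rw [lt_iSup_iff] at h2
    obtain ⟨t, h2⟩ := h2
    rw [lt_iSup_iff] at h2
    obtain ⟨ht, h2⟩ := h2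
    exact ⟨t, ht, h2⟩
  set N := eLpNorm (heat1 s₀ (⇑f)) ⊤ volume with hNdef
  have hN0 : N ≠ 0 := by
    intro hN
    rw [hN, mul_zero] at hterm
    exact absurd hterm (not_lt.2 (zero_le))
  have hNt : N ≠ ⊤ :=
    ne_top_of_le_ne_top ENNReal.ofReal_ne_top (eLpNorm_heat1_le hs₀ hfi)
  -- the f-level set
  set a := (3/4 : ℝ) * N.toReal with hadef
  have ha0 : 0 ≤ a := by positivity
  have hofa : ENNReal.ofReal a = ENNReal.ofReal (3/4 : ℝ) * N := by
    rw [hadef, ENNReal.ofReal_mul (by norm_num), ENNReal.ofReal_toReal hNt]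
  have haN : ENNReal.ofReal a < N := by
    rw [hofa]
    conv_rhs => rw [← one_mul N]
    apply ENNReal.mul_lt_mul_left hN0 hNt
    exact ENNReal.ofReal_lt_one.2 (by norm_num)
  have hSf : 0 < volume {u : ℝ | a < |heat1 s₀ (⇑f) u|} :=
    pos_meas_of_lt_eLpNormTop ha0 haN
  have hPc : Continuous (heat1 s₀ (⇑f)) := heat1_continuous hs₀ f.continuous hMf
  have hSfm : MeasurableSet {u : ℝ | a < |heat1 s₀ (⇑f) u|} :=
    (isOpen_lt continuous_const hPc.abs).measurableSet
  -- the g point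
  set b := (2/3 : ℝ) * G.toReal with hbdef
  have hGtR : 0 < G.toReal := ENNReal.toReal_pos hG0 hGt
  have hb0 : 0 ≤ b := by positivity
  have hofb : ENNReal.ofReal b = ENNReal.ofReal (2/3 : ℝ) * G := by
    rw [hbdef, ENNReal.ofReal_mul (by norm_num), ENNReal.ofReal_toReal hGt]
  have hgx : ∃ xg : ℝ, (3/4 : ℝ) * G.toReal < |g xg| := by
    have hlt : ENNReal.ofReal ((3/4 : ℝ) * G.toReal) < G := by
      rw [ENNReal.ofReal_mul (by norm_num), ENNReal.ofReal_toReal hGt]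
      conv_rhs => rw [← one_mul G]
      apply ENNReal.mul_lt_mul_left hG0 hGt
      exact ENNReal.ofReal_lt_one.2 (by norm_num)
    obtain ⟨xg, hxg⟩ := nonempty_of_measure_ne_zero
      (pos_meas_of_lt_eLpNormTop (by positivity) hlt).ne'
    exact ⟨xg, hxg⟩
  obtain ⟨xg, hxg⟩ := hgx
  have hbxg : b < |g xg| := lt_of_lt_of_le (by rw [hbdef]; nlinarith) hxg.le
  obtain ⟨τg₀, hτg₀, hτgsub⟩ : ∃ τg₀ ∈ Set.Ioi (0:ℝ),
      Set.Ioo 0 τg₀ ⊆ {τ : ℝ | b < |heat1 τ (⇑g) xg|} := by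
    rw [← mem_nhdsGT_iff_exists_Ioo_subset]
    exact ((heat1_tendsto g.continuous hMg xg).abs).eventually_const_lt hbxg
  -- the h point
  set c := (2/3 : ℝ) * H.toReal with hcdef
  have hHtR : 0 < H.toReal := ENNReal.toReal_pos hH0 hHt
  have hc0 : 0 ≤ c := by positivity
  have hofc : ENNReal.ofReal c = ENNReal.ofReal (2/3 : ℝ) * H := by
    rw [hcdef, ENNReal.ofReal_mul (by norm_num), ENNReal.ofReal_toReal hHt]
  have hhx : ∃ xh : ℝ, (3/4 : ℝ) * H.toReal < |h xh| := by
    have hlt : ENNReal.ofReal ((3/4 : ℝ) * H.toReal) < H := by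
      rw [ENNReal.ofReal_mul (by norm_num), ENNReal.ofReal_toReal hHt]
      conv_rhs => rw [← one_mul H]
      apply ENNReal.mul_lt_mul_left hH0 hHt
      exact ENNReal.ofReal_lt_one.2 (by norm_num)
    obtain ⟨xh, hxh⟩ := nonempty_of_measure_ne_zero
      (pos_meas_of_lt_eLpNormTop (by positivity) hlt).ne'
    exact ⟨xh, hxh⟩
  obtain ⟨xh, hxh⟩ := hhx
  have hbxh : c < |h xh| := lt_of_lt_of_le (by rw [hcdef]; nlinarith) hxh.le
  obtain ⟨τh₀, hτh₀, hτhsub⟩ : ∃ τh₀ ∈ Set.Ioi (0:ℝ),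
      Set.Ioo 0 τh₀ ⊆ {τ : ℝ | c < |heat1 τ (⇑h) xh|} := by
    rw [← mem_nhdsGT_iff_exists_Ioo_subset]
    exact ((heat1_tendsto h.continuous hMh xh).abs).eventually_const_lt hbxh
  -- exponents
  have hpg : 0 < 2*β - 2*α := by linarith
  have hph : 0 < 2 - 2*α := by linarith
  -- choose ε₀
  refine ⟨min 1 (min ((τg₀/s₀) ^ (1/(2*β-2*α))) ((τh₀/s₀) ^ (1/(2-2*α)))), by
    have h1 : (0:ℝ) < (τg₀/s₀) ^ (1/(2*β-2*α)) :=
      Real.rpow_pos_of_pos (div_pos hτg₀ hs₀) _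
    have h2 : (0:ℝ) < (τh₀/s₀) ^ (1/(2-2*α)) :=
      Real.rpow_pos_of_pos (div_pos hτh₀ hs₀) _
    positivity, ?_⟩
  intro ε hε hεlt
  set t := ε ^ (-(2*α)) * s₀ with htdef
  have hεα : 0 < ε ^ α := Real.rpow_pos_of_pos hε α
  have hεβ : 0 < ε ^ β := Real.rpow_pos_of_pos hε β
  have ht : 0 < t := mul_pos (Real.rpow_pos_of_pos hε _) hs₀
  -- the three rescaled times
  have hid1 : (ε ^ α) ^ (2:ℕ) * t = s₀ := by
    rw [htdef, ← Real.rpow_natCast (ε ^ α) 2, ← Real.rpow_mul hε.le, ← mul_assoc,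
      ← Real.rpow_add hε]
    rw [show α * ((2:ℕ):ℝ) + -(2 * α) = 0 by push_cast; ring, Real.rpow_zero, one_mul]
  have hid2 : (ε ^ β) ^ (2:ℕ) * t = ε ^ (2*β - 2*α) * s₀ := by
    rw [htdef, ← Real.rpow_natCast (ε ^ β) 2, ← Real.rpow_mul hε.le, ← mul_assoc,
      ← Real.rpow_add hε]
    ring_nf
  have hid3 : ε ^ (2:ℕ) * t = ε ^ (2 - 2*α) * s₀ := by
    rw [htdef, ← Real.rpow_natCast ε 2, ← mul_assoc, ← Real.rpow_add hε]
    ring_nf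
  set τg := ε ^ (2*β - 2*α) * s₀ with hτgdef
  set τh := ε ^ (2 - 2*α) * s₀ with hτhdef
  have hτgpos : 0 < τg := mul_pos (Real.rpow_pos_of_pos hε _) hs₀
  have hτhpos : 0 < τh := mul_pos (Real.rpow_pos_of_pos hε _) hs₀
  have hτglt : τg < τg₀ := by
    have hε2 : ε < (τg₀/s₀) ^ (1/(2*β-2*α)) :=
      lt_of_lt_of_le hεlt (le_trans (min_le_right _ _) (min_le_left _ _))
    have h3 := Real.rpow_lt_rpow hε.le hε2 hpg
    rw [← Real.rpow_mul (div_nonneg hτg₀.le hs₀.le), one_div,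
      inv_mul_cancel₀ hpg.ne', Real.rpow_one] at h3
    rw [hτgdef]
    calc ε ^ (2*β - 2*α) * s₀ < (τg₀/s₀) * s₀ := by
          exact mul_lt_mul_of_pos_right h3 hs₀
      _ = τg₀ := by field_simp
  have hτhlt : τh < τh₀ := by
    have hε2 : ε < (τh₀/s₀) ^ (1/(2-2*α)) :=
      lt_of_lt_of_le hεlt (le_trans (min_le_right _ _) (min_le_right _ _))
    have h3 := Real.rpow_lt_rpow hε.le hε2 hph
    rw [← Real.rpow_mul (div_nonneg hτh₀.le hs₀.le), one_div,
      inv_mul_cancel₀ hph.ne', Real.rpow_one] at h3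
    rw [hτhdef]
    calc ε ^ (2 - 2*α) * s₀ < (τh₀/s₀) * s₀ := by
          exact mul_lt_mul_of_pos_right h3 hs₀
      _ = τh₀ := by field_simp
  -- continuity and level sets for Q and R
  have hQc : Continuous (heat1 τg (⇑g)) := heat1_continuous hτgpos g.continuous hMg
  have hRc : Continuous (heat1 τh (⇑h)) := heat1_continuous hτhpos h.continuous hMh
  have hQx : b < |heat1 τg (⇑g) xg| := hτgsub ⟨hτgpos, hτglt⟩
  have hRx : c < |heat1 τh (⇑h) xh| := hτhsub ⟨hτhpos, hτhlt⟩
  have hSg : 0 < volume {u : ℝ | b < |heat1 τg (⇑g) u|} :=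
    (isOpen_lt continuous_const hQc.abs).measure_pos volume ⟨xg, hQx⟩
  have hSh : 0 < volume {u : ℝ | c < |heat1 τh (⇑h) u|} :=
    (isOpen_lt continuous_const hRc.abs).measure_pos volume ⟨xh, hRx⟩
  -- the key pointwise identity
  have hkey : ∀ x : EuclideanSpace ℝ (Fin 3),
      heat3 t (fun z => f (ε ^ α * z 0) * g (ε ^ β * z 1) * h (ε * z 2)) x
        = heat1 s₀ (⇑f) (ε ^ α * x 0) * heat1 τg (⇑g) (ε ^ β * x 1)
            * heat1 τh (⇑h) (ε * x 2) := by
    intro x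
    have hfac := heat3_factor ht (fun u => f (ε ^ α * u)) (fun u => g (ε ^ β * u))
      (fun u => h (ε * u)) x
    calc heat3 t (fun z => f (ε ^ α * z 0) * g (ε ^ β * z 1) * h (ε * z 2)) x
        = heat1 t (fun u => f (ε ^ α * u)) (x 0) * heat1 t (fun u => g (ε ^ β * u)) (x 1)
            * heat1 t (fun u => h (ε * u)) (x 2) := hfac
      _ = heat1 s₀ (⇑f) (ε ^ α * x 0) * heat1 τg (⇑g) (ε ^ β * x 1)
            * heat1 τh (⇑h) (ε * x 2) := by
          rw [heat1_scale ht hεα (⇑f) (x 0), heat1_scale ht hεβ (⇑g) (x 1),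
            heat1_scale ht hε (⇑h) (x 2), hid1, hid2, hid3]
  -- the positive-measure product set
  set A : Fin 3 → Set ℝ :=
    ![{u : ℝ | ε ^ α * u ∈ {v : ℝ | a < |heat1 s₀ (⇑f) v|}},
      {u : ℝ | ε ^ β * u ∈ {v : ℝ | b < |heat1 τg (⇑g) v|}},
      {u : ℝ | ε * u ∈ {v : ℝ | c < |heat1 τh (⇑h) v|}}] with hAdef
  have hAm : ∀ i, MeasurableSet (A i) := by
    intro i
    fin_cases i
    · exact (measurable_const_mul (ε ^ α)) hSfm
    · exact (measurable_const_mul (ε ^ β))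
        (isOpen_lt continuous_const hQc.abs).measurableSet
    · exact (measurable_const_mul ε)
        (isOpen_lt continuous_const hRc.abs).measurableSet
  have hApos : ∀ i, 0 < volume (A i) := by
    intro i
    fin_cases i
    · exact vol_preimage_mul_pos hεα.ne' hSfm hSf
    · exact vol_preimage_mul_pos hεβ.ne'
        (isOpen_lt continuous_const hQc.abs).measurableSet hSg
    · exact vol_preimage_mul_pos hε.ne'
        (isOpen_lt continuous_const hRc.abs).measurableSet hSh
  set T := ((MeasurableEquiv.toLp 2 (Fin 3 → ℝ)).symm) ⁻¹' (Set.univ.pi A) with hTdef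
  have hT : 0 < volume T := by
    rw [hTdef, (EuclideanSpace.volume_preserving_symm_measurableEquiv_toLp (Fin 3)).measure_preimage
      (MeasurableSet.univ_pi hAm).nullMeasurableSet, volume_pi_pi]
    rw [Fin.prod_univ_three]
    exact ENNReal.mul_pos (ENNReal.mul_pos (hApos 0).ne' (hApos 1).ne').ne' (hApos 2).ne'
  -- T is contained in the superlevel set
  have hTsub : T ⊆ {x : EuclideanSpace ℝ (Fin 3) |
      ENNReal.ofReal a * ENNReal.ofReal b * ENNReal.ofReal c
        ≤ (‖heat3 t (fun z => f (ε ^ α * z 0) * g (ε ^ β * z 1) * h (ε * z 2)) x‖₊ : ENNReal)} := by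
    intro x hx
    rw [hTdef, Set.mem_preimage, Set.mem_pi] at hx
    have h0 := hx 0 (Set.mem_univ _)
    have h1 := hx 1 (Set.mem_univ _)
    have h2 := hx 2 (Set.mem_univ _)
    rw [hAdef] at h0 h1 h2
    simp only [Matrix.cons_val_zero, Matrix.cons_val_one, Matrix.head_cons,
      Matrix.cons_val_two, Matrix.tail_cons, Set.mem_setOf_eq] at h0 h1 h2
    have hxapp : ∀ i : Fin 3, ((MeasurableEquiv.toLp 2 (Fin 3 → ℝ)).symm) x i = x i := fun i => rfl
    rw [hxapp 0] at h0
    rw [hxapp 1] at h1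
    rw [hxapp 2] at h2
    simp only [Set.mem_setOf_eq]
    rw [hkey x, ← enorm_eq_nnnorm, Real.enorm_eq_ofReal_abs, abs_mul, abs_mul]
    rw [← ENNReal.ofReal_mul ha0, ← ENNReal.ofReal_mul (by positivity)]
    apply ENNReal.ofReal_le_ofReal
    have hP0 : 0 ≤ |heat1 s₀ (⇑f) (ε ^ α * x 0)| := abs_nonneg _
    have hQ0 : 0 ≤ |heat1 τg (⇑g) (ε ^ β * x 1)| := abs_nonneg _
    exact mul_le_mul (mul_le_mul h0.le h1.le hb0 hP0) h2.le hc0 (mul_nonneg hP0 hQ0)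
  -- lower bound on the essential sup of the heat extension
  have hElp : ENNReal.ofReal a * ENNReal.ofReal b * ENNReal.ofReal c
      ≤ eLpNorm (heat3 t (fun z => f (ε ^ α * z 0) * g (ε ^ β * z 1) * h (ε * z 2))) ⊤ volume :=
    le_eLpNormTop_of_pos_meas (lt_of_lt_of_le hT (measure_mono hTsub))
  -- final assembly
  refine le_trans ?_ (le_iSup₂_of_le t ht le_rfl)
  have hofat : ENNReal.ofReal (t ^ ((1:ℝ)/2))
      = ENNReal.ofReal (ε ^ (-α)) * ENNReal.ofReal (s₀ ^ ((1:ℝ)/2)) := by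
    rw [htdef, Real.mul_rpow (Real.rpow_nonneg hε.le _) hs₀.le,
      ← Real.rpow_mul hε.le, ENNReal.ofReal_mul (Real.rpow_nonneg hε.le _)]
    rw [show -(2 * α) * (1/2) = -α by ring]
  have hnum : ENNReal.ofReal ((1/4 : ℝ) * ε ^ (-α))
      = ENNReal.ofReal (ε ^ (-α)) * ENNReal.ofReal (3/4 : ℝ) * ENNReal.ofReal (3/4 : ℝ)
        * ENNReal.ofReal (2/3 : ℝ) * ENNReal.ofReal (2/3 : ℝ) := by
    rw [← ENNReal.ofReal_mul (by positivity), ← ENNReal.ofReal_mul (by positivity),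
      ← ENNReal.ofReal_mul (by positivity), ← ENNReal.ofReal_mul (by positivity)]
    congr 1
    ring
  calc ENNReal.ofReal ((1/4 : ℝ) * ε ^ (-α)) * C * G * H
      = (ENNReal.ofReal (ε ^ (-α)) * ENNReal.ofReal (3/4 : ℝ) * ENNReal.ofReal (2/3 : ℝ)
          * ENNReal.ofReal (2/3 : ℝ) * G * H) * (ENNReal.ofReal (3/4 : ℝ) * C) := by
        rw [hnum]; ring
    _ ≤ (ENNReal.ofReal (ε ^ (-α)) * ENNReal.ofReal (3/4 : ℝ) * ENNReal.ofReal (2/3 : ℝ)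
          * ENNReal.ofReal (2/3 : ℝ) * G * H) * (ENNReal.ofReal (s₀ ^ ((1:ℝ)/2)) * N) :=
        mul_le_mul_right hterm.le _
    _ = (ENNReal.ofReal (ε ^ (-α)) * ENNReal.ofReal (s₀ ^ ((1:ℝ)/2)))
          * (ENNReal.ofReal a * ENNReal.ofReal b * ENNReal.ofReal c) := by
        rw [hofa, hofb, hofc]; ring
    _ = ENNReal.ofReal (t ^ ((1:ℝ)/2)) * (ENNReal.ofReal a * ENNReal.ofReal b * ENNReal.ofReal c) := by
        rw [hofat]
    _ ≤ ENNReal.ofReal (t ^ ((1:ℝ)/2)) *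
          eLpNorm (heat3 t (fun z => f (ε ^ α * z 0) * g (ε ^ β * z 1) * h (ε * z 2))) ⊤ volume :=
        mul_le_mul_right hElp _
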